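/- Let x ~ N(μ,1) and define ξ(t,μ) = E[(x − μ)(η_H(x,t) − μ)], the covariance between the data and the hard-threshold estimate. Then ξ(t,μ) = t[φ(t−μ) + φ(t+μ)] + Φ̄(t−μ) + Φ(−t−μ). -/

import Mathlib

open MeasureTheory Set
open Filter Real

/-- Standard Gaussian density. -/
noncomputable def gphi (v : ℝ) : ℝ := (Real.sqrt (2 * Real.pi))⁻¹ * Real.exp (-v ^ 2 / 2)


lemma gphi_eq (v : ℝ) : gphi v = (Real.sqrt (2 * Real.pi))⁻¹ * Real.exp (-(1/2) * v ^ 2) := by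
  unfold gphi; ring_nf

lemma continuous_gphi : Continuous gphi := by
  unfold gphi; fun_prop

lemma gphi_even (v : ℝ) : gphi (-v) = gphi v := by unfold gphi; ring_nf

lemma hasDerivAt_gphi (v : ℝ) : HasDerivAt gphi (-v * gphi v) v := by
  unfold gphi
  have h1 : HasDerivAt (fun v : ℝ => -v ^ 2 / 2) (-v) v := by
    have := ((hasDerivAt_pow 2 v).neg).div_const 2
    exact this.congr_deriv (by simp; ring)
  have h2 := (h1.exp).const_mul (Real.sqrt (2 * Real.pi))⁻¹
  exact h2.congr_deriv (by ring)

lemma integrable_gphi : Integrable gphi := by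
  refine ((integrable_exp_neg_mul_sq (by norm_num : (0:ℝ) < 1/2)).const_mul
    (Real.sqrt (2 * Real.pi))⁻¹).congr (Eventually.of_forall fun x => ?_)
  rw [gphi_eq]

lemma integrable_id_gphi : Integrable (fun v => v * gphi v) := by
  refine ((integrable_mul_exp_neg_mul_sq (by norm_num : (0:ℝ) < 1/2)).const_mul
    (Real.sqrt (2 * Real.pi))⁻¹).congr (Eventually.of_forall fun x => ?_)
  simp only [gphi_eq]; ring

lemma integrable_sq_gphi : Integrable (fun v => v ^ 2 * gphi v) := by
  have h := (integrable_rpow_mul_exp_neg_mul_sq (by norm_num : (0:ℝ) < 1/2)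
    (by norm_num : (-1:ℝ) < 2)).const_mul (Real.sqrt (2 * Real.pi))⁻¹
  simp_rw [Real.rpow_two] at h
  refine h.congr (Eventually.of_forall fun x => ?_)
  simp only [gphi_eq]; ring

/-- Standard Gaussian upper tail probability. -/
noncomputable def PhiBar (v : ℝ) : ℝ := ∫ x in Set.Ioi v, gphi x

/-- Standard Gaussian CDF. -/
noncomputable def Phi (v : ℝ) : ℝ := ∫ x in Set.Iic v, gphi x

lemma tendsto_gphi_atTop : Tendsto gphi atTop (nhds 0) := by
  have h1 : Tendsto (fun v : ℝ => -v ^ 2 / 2) atTop atBot := by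
    apply Tendsto.atBot_div_const two_pos
    exact tendsto_neg_atBot_iff.mpr (tendsto_pow_atTop (by norm_num))
  have := (Real.tendsto_exp_atBot.comp h1).const_mul (Real.sqrt (2 * Real.pi))⁻¹
  unfold gphi
  simpa only [Function.comp_def, mul_zero] using this

lemma tendsto_id_gphi_atTop : Tendsto (fun v => v * gphi v) atTop (nhds 0) := by
  have hlo := rpow_mul_exp_neg_mul_sq_isLittleO_exp_neg (by norm_num : (0:ℝ) < 1/2) 1
  have hlo2 : (fun v : ℝ => v * Real.exp (-(1/2) * v ^ 2)) =o[atTop]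
      fun x : ℝ => Real.exp (-(1/2) * x) := by
    refine hlo.congr' ?_ (Eventually.of_forall fun x => rfl)
    filter_upwards [eventually_ge_atTop (0:ℝ)] with x hx
    rw [Real.rpow_one]
  have h0 : Tendsto (fun x : ℝ => Real.exp (-(1/2) * x)) atTop (nhds 0) := by
    apply Real.tendsto_exp_atBot.comp
    have : Tendsto (fun x : ℝ => -(x / 2)) atTop atBot :=
      tendsto_neg_atBot_iff.mpr (tendsto_id.atTop_div_const two_pos)
    exact this.congr fun x => by ring
  have := (hlo2.isBigO.trans_tendsto h0).const_mul ((Real.sqrt (2 * Real.pi))⁻¹)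
  rw [mul_zero] at this
  refine this.congr fun v => ?_
  rw [gphi_eq]; ring

lemma tendsto_gphi_atBot : Tendsto gphi atBot (nhds 0) := by
  have := tendsto_gphi_atTop.comp tendsto_neg_atBot_atTop
  exact this.congr fun x => by simp [Function.comp, gphi_even]

lemma tendsto_id_gphi_atBot : Tendsto (fun v => v * gphi v) atBot (nhds 0) := by
  have := (tendsto_id_gphi_atTop.comp tendsto_neg_atBot_atTop).neg
  rw [neg_zero] at this
  exact this.congr fun x => by simp [Function.comp, gphi_even]

lemma tendsto_shift_atTop (μ : ℝ) : Tendsto (fun x : ℝ => x - μ) atTop atTop :=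
  tendsto_atTop_add_const_right atTop (-μ) tendsto_id |>.congr fun x => by simp only [id_eq]; ring

lemma tendsto_shift_atBot (μ : ℝ) : Tendsto (fun x : ℝ => x - μ) atBot atBot :=
  tendsto_atBot_add_const_right atBot (-μ) tendsto_id |>.congr fun x => by simp only [id_eq]; ring

lemma tendsto_xgphi_atTop (μ : ℝ) : Tendsto (fun x => x * gphi (x - μ)) atTop (nhds 0) := by
  have h1 := tendsto_id_gphi_atTop.comp (tendsto_shift_atTop μ)
  have h2 := (tendsto_gphi_atTop.comp (tendsto_shift_atTop μ)).const_mul μ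
  have := h1.add h2
  simp only [mul_zero, add_zero] at this
  exact this.congr fun x => by simp only [Function.comp_apply]; ring

lemma tendsto_xgphi_atBot (μ : ℝ) : Tendsto (fun x => x * gphi (x - μ)) atBot (nhds 0) := by
  have h1 := tendsto_id_gphi_atBot.comp (tendsto_shift_atBot μ)
  have h2 := (tendsto_gphi_atBot.comp (tendsto_shift_atBot μ)).const_mul μ
  have := h1.add h2
  simp only [mul_zero, add_zero] at this
  exact this.congr fun x => by simp only [Function.comp_apply]; ring

lemma Phi_sub (v : ℝ) : Phi v = Phi 0 + ∫ x in (0:ℝ)..v, gphi x := by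
  have h := intervalIntegral.integral_Iic_sub_Iic (a := (0:ℝ)) (b := v)
    integrable_gphi.integrableOn integrable_gphi.integrableOn
  unfold Phi
  linarith [h]

lemma hasDerivAt_Phi (v : ℝ) : HasDerivAt Phi (gphi v) v := by
  have h := (continuous_gphi.integral_hasStrictDerivAt 0 v).hasDerivAt
  have : Phi = fun u => Phi 0 + ∫ x in (0:ℝ)..u, gphi x := funext Phi_sub
  rw [this]
  exact h.const_add (Phi 0)

lemma tendsto_Phi_atTop : Tendsto Phi atTop (nhds (Phi 0 + PhiBar 0)) := by
  have h := intervalIntegral_tendsto_integral_Ioi 0 integrable_gphi.integrableOn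
    (tendsto_id (α := ℝ))
  have := (tendsto_const_nhds (x := Phi 0) (f := atTop)).add h
  exact this.congr fun v => by simpa using (Phi_sub v).symm

lemma tendsto_Phi_atBot : Tendsto Phi atBot (nhds 0) := by
  have h := intervalIntegral_tendsto_integral_Iic 0 integrable_gphi.integrableOn
    (tendsto_id (α := ℝ))
  have h2 := (tendsto_const_nhds (x := Phi 0) (f := atBot)).sub h
  rw [show Phi 0 - ∫ x in Iic (0:ℝ), gphi x = 0 by unfold Phi; ring] at h2
  refine h2.congr fun v => ?_
  simp only [id_eq]
  rw [Phi_sub v, intervalIntegral.integral_symm]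
  ring

lemma Phi_add_PhiBar (a : ℝ) : Phi a + PhiBar a = Phi 0 + PhiBar 0 := by
  unfold Phi PhiBar
  rw [intervalIntegral.integral_Iic_add_Ioi integrable_gphi.integrableOn integrable_gphi.integrableOn,
    intervalIntegral.integral_Iic_add_Ioi integrable_gphi.integrableOn integrable_gphi.integrableOn]

lemma integrable_h (μ : ℝ) : Integrable (fun x => x * (x - μ) * gphi (x - μ)) := by
  have h1 := integrable_sq_gphi.comp_sub_right μ
  have h2 := (integrable_id_gphi.comp_sub_right μ).const_mul μ
  refine (h1.add h2).congr (Eventually.of_forall fun x => ?_)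
  simp only [Pi.add_apply]; ring

lemma I_Ioi_id (a : ℝ) : ∫ v in Ioi a, v * gphi v = gphi a := by
  have h := integral_Ioi_of_hasDerivAt_of_tendsto' (a := a) (m := 0)
    (f := fun v => -gphi v) (f' := fun v => v * gphi v)
    (fun x _ => (hasDerivAt_gphi x).neg.congr_deriv (by ring))
    integrable_id_gphi.integrableOn
    (by simpa using tendsto_gphi_atTop.neg)
  rw [h]; ring

lemma I_Iic_id (a : ℝ) : ∫ v in Iic a, v * gphi v = -gphi a := by
  have h := integral_Iic_of_hasDerivAt_of_tendsto' (a := a) (m := 0)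
    (f := fun v => -gphi v) (f' := fun v => v * gphi v)
    (fun x _ => (hasDerivAt_gphi x).neg.congr_deriv (by ring))
    integrable_id_gphi.integrableOn
    (by simpa using tendsto_gphi_atBot.neg)
  rw [h]; ring

lemma integral_id_gphi : (∫ v : ℝ, v * gphi v) = 0 := by
  rw [← intervalIntegral.integral_Iic_add_Ioi (b := (0:ℝ))
    integrable_id_gphi.integrableOn integrable_id_gphi.integrableOn,
    I_Ioi_id, I_Iic_id]
  ring

lemma hasDerivAt_F (μ x : ℝ) :
    HasDerivAt (fun x => -x * gphi (x - μ) + Phi (x - μ))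
      (x * (x - μ) * gphi (x - μ)) x := by
  have hs : HasDerivAt (fun x : ℝ => x - μ) 1 x := (hasDerivAt_id x).sub_const μ
  have hg : HasDerivAt (fun x => gphi (x - μ)) (-(x - μ) * gphi (x - μ)) x := by
    exact ((hasDerivAt_gphi (x - μ)).comp x hs).congr_deriv (by ring : -(x - μ) * gphi (x - μ) * 1 = -(x - μ) * gphi (x - μ))
  have h1 := ((hasDerivAt_id x).neg).mul hg
  have h2 : HasDerivAt (fun x => Phi (x - μ)) (gphi (x - μ)) x := by
    exact ((hasDerivAt_Phi (x - μ)).comp x hs).congr_deriv (by ring : gphi (x - μ) * 1 = gphi (x - μ))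
  exact (h1.add h2).congr_deriv (by simp only [Pi.neg_apply, id_eq]; ring)

lemma J_Ioi (μ t : ℝ) :
    ∫ x in Ioi t, x * (x - μ) * gphi (x - μ) = t * gphi (t - μ) + PhiBar (t - μ) := by
  have hF : Tendsto (fun x => -x * gphi (x - μ) + Phi (x - μ)) atTop
      (nhds (0 + (Phi 0 + PhiBar 0))) := by
    refine Tendsto.add ?_ (tendsto_Phi_atTop.comp (tendsto_shift_atTop μ))
    simpa using (tendsto_xgphi_atTop μ).neg
  have h := integral_Ioi_of_hasDerivAt_of_tendsto' (a := t)
    (fun x _ => hasDerivAt_F μ x) (integrable_h μ).integrableOn hF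
  rw [h]
  have := Phi_add_PhiBar (t - μ)
  ring_nf
  linarith [this]

lemma J_Iic (μ t : ℝ) :
    ∫ x in Iic (-t), x * (x - μ) * gphi (x - μ) = t * gphi (t + μ) + Phi (-t - μ) := by
  have hF : Tendsto (fun x => -x * gphi (x - μ) + Phi (x - μ)) atBot (nhds (0 + 0)) := by
    refine Tendsto.add ?_ (tendsto_Phi_atBot.comp (tendsto_shift_atBot μ))
    simpa using (tendsto_xgphi_atBot μ).neg
  have h := integral_Iic_of_hasDerivAt_of_tendsto' (a := -t)
    (fun x _ => hasDerivAt_F μ x) (integrable_h μ).integrableOn hF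
  rw [h]
  have he : gphi (-t - μ) = gphi (t + μ) := by
    rw [show -t - μ = -(t + μ) by ring, gphi_even]
  rw [he]; ring

noncomputable def etaH (x t : ℝ) : ℝ := if t ≤ |x| then x else 0

theorem stmt10 (μm t : ℝ) (ht : 0 < t) :
    (∫ x : ℝ, (x - μm) * (etaH x t - μm) * gphi (x - μm)) =
      t * (gphi (t - μm) + gphi (t + μm)) + PhiBar (t - μm) + Phi (-t - μm) := by
  set S : Set ℝ := Iic (-t) ∪ Ici t with hS
  have hSmeas : MeasurableSet S := measurableSet_Iic.union measurableSet_Ici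
  have hmem : ∀ x : ℝ, x ∈ S ↔ t ≤ |x| := by
    intro x
    rw [hS, Set.mem_union, Set.mem_Iic, Set.mem_Ici, le_abs, le_neg]
    tauto
  have hbase : Integrable (fun x => -μm * ((x - μm) * gphi (x - μm))) := by
    refine ((integrable_id_gphi.comp_sub_right μm).const_mul (-μm)).congr
      (Eventually.of_forall fun x => rfl)
  have hind : Integrable (S.indicator fun x => x * (x - μm) * gphi (x - μm)) :=
    (integrable_h μm).indicator hSmeas
  have hint : ∀ x : ℝ, (x - μm) * (etaH x t - μm) * gphi (x - μm)
      = -μm * ((x - μm) * gphi (x - μm))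
        + S.indicator (fun x => x * (x - μm) * gphi (x - μm)) x := by
    intro x
    by_cases h : t ≤ |x|
    · rw [Set.indicator_of_mem ((hmem x).mpr h)]
      unfold etaH; rw [if_pos h]; ring
    · rw [Set.indicator_of_notMem (fun hx => h ((hmem x).mp hx))]
      unfold etaH; rw [if_neg h]; ring
  rw [integral_congr_ae (Eventually.of_forall hint), integral_add hbase hind,
    integral_indicator hSmeas]
  have hdisj : Disjoint (Iic (-t)) (Ici t) := Iic_disjoint_Ici.mpr (by linarith)
  rw [hS, setIntegral_union hdisj measurableSet_Ici (integrable_h μm).integrableOn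
    (integrable_h μm).integrableOn, integral_Ici_eq_integral_Ioi, J_Ioi, J_Iic]
  have hzero : (∫ x : ℝ, -μm * ((x - μm) * gphi (x - μm))) = 0 := by
    rw [integral_const_mul, integral_sub_right_eq_self (fun y => y * gphi y) μm,
      integral_id_gphi, mul_zero]
  rw [hzero]
  ring
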